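/- Let F : A → B be a fully faithful exact functor between abelian categories admitting a left adjoint L and a right adjoint R. Assume that for every object b of B the unit morphism b → F(L(b)) is an epimorphism and the counit morphism F(R(b)) → b is a monomorphism. Then the essential image of F is closed under subobjects and quotients in B. -/

import Mathlib

open CategoryTheory CategoryTheory.Limits

/-- Let `F : A ⥤ B` be a fully faithful exact functor between abelian
categories, with left adjoint `L` and right adjoint `R`.  If for every `b : B` the
unit `b ⟶ F (L b)` is an epimorphism and the counit `F (R b) ⟶ b` is a monomorphism,
then the essential image of `F` is closed under subobjects and quotients in `B`. -/
theorem essImage_closed_under_sub_and_quot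
    {A B : Type*} [Category A] [Category B] [Abelian A] [Abelian B]
    (F : A ⥤ B) [F.Full] [F.Faithful]
    [PreservesFiniteLimits F] [PreservesFiniteColimits F]
    (L R : B ⥤ A) (adjL : L ⊣ F) (adjR : F ⊣ R)
    (hepi : ∀ b : B, Epi (adjL.unit.app b))
    (hmono : ∀ b : B, Mono (adjR.counit.app b)) :
    (∀ (a : A) (b : B) (f : b ⟶ F.obj a), Mono f → F.essImage b) ∧
    (∀ (a : A) (b : B) (f : F.obj a ⟶ b), Epi f → F.essImage b) := by
  constructor
  · intro a b f hf
    have hfac : f = adjL.unit.app b ≫ F.map ((adjL.homEquiv b a).symm f) := by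
      have := ((adjL.homEquiv b a).apply_symm_apply f).symm
      rwa [Adjunction.homEquiv_unit] at this
    have : Mono (adjL.unit.app b) := by
      rw [hfac] at hf
      exact mono_of_mono (adjL.unit.app b) (F.map ((adjL.homEquiv b a).symm f))
    have := hepi b
    have : IsIso (adjL.unit.app b) := isIso_of_mono_of_epi _
    exact ⟨L.obj b, ⟨(asIso (adjL.unit.app b)).symm⟩⟩
  · intro a b f hf
    have hfac : f = F.map (adjR.homEquiv a b f) ≫ adjR.counit.app b := by
      have := ((adjR.homEquiv a b).symm_apply_apply f).symm
      rwa [Adjunction.homEquiv_counit] at this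
    have : Epi (adjR.counit.app b) := by
      rw [hfac] at hf
      exact epi_of_epi (F.map (adjR.homEquiv a b f)) (adjR.counit.app b)
    have := hmono b
    have : IsIso (adjR.counit.app b) := isIso_of_mono_of_epi _
    exact ⟨R.obj b, ⟨asIso (adjR.counit.app b)⟩⟩
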